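/- Let d n : ℕ with d, n ≥ 1. Let ρA : Matrix (Fin d) (Fin d) ℂ be positive definite and let μ : Fin n → ℝ with 0 < μ s for all s; set ρB := Matrix.diagonal (fun s => (μ s : ℂ)). Let σ¼ := ρA¼ ⊗ₖ Matrix.diagonal (fun s => ((μ s) ^ (1/4 : ℝ) : ℂ)), where ρA¼ is the positive semidefinite square root of the positive semidefinite square root of ρA. Define P := { σ¼ * M * σ¼ | M : Matrix (Fin d × Fin n) (Fin d × Fin n) ℂ positive semidefinite } and Pτ := Γ '' P. Then { σ¼ * M * σ¼ | M positive semidefinite and Γ(M) positive semidefinite } = P ∩ Pτ. -/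

import Mathlib

open Matrix ComplexOrder Kronecker

namespace Matrix.PosSemidef

/-- The positive semidefinite square root of a positive semidefinite matrix
(the definition removed from Mathlib, restored with its old meaning). -/
noncomputable def sqrt {𝕜 : Type*} [RCLike 𝕜] {m : Type*} [Fintype m] [DecidableEq m]
    {A : Matrix m m 𝕜} (hA : PosSemidef A) : Matrix m m 𝕜 :=
  hA.1.eigenvectorUnitary.1 * diagonal ((↑) ∘ Real.sqrt ∘ hA.1.eigenvalues) *
  (star hA.1.eigenvectorUnitary : Matrix m m 𝕜)

lemma posSemidef_sqrt {𝕜 : Type*} [RCLike 𝕜] {m : Type*} [Fintype m] [DecidableEq m]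
    {A : Matrix m m 𝕜} (hA : PosSemidef A) : PosSemidef hA.sqrt := by
  have h : PosSemidef (diagonal ((↑) ∘ Real.sqrt ∘ hA.1.eigenvalues : m → 𝕜)) := by
    rw [posSemidef_diagonal_iff]
    intro i
    simp only [Function.comp_apply, RCLike.ofReal_nonneg]
    exact Real.sqrt_nonneg _
  have := h.mul_mul_conjTranspose_same (hA.1.eigenvectorUnitary.1)
  unfold sqrt
  simpa [Matrix.star_eq_conjTranspose] using this

end Matrix.PosSemidef

namespace Matrix.PosSemidef

lemma sqrt_mul_self {𝕜 : Type*} [RCLike 𝕜] {m : Type*} [Fintype m] [DecidableEq m]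
    {A : Matrix m m 𝕜} (hA : PosSemidef A) : hA.sqrt * hA.sqrt = A := by
  conv_rhs => rw [hA.1.spectral_theorem]
  have hU : (star hA.1.eigenvectorUnitary : Matrix m m 𝕜) * hA.1.eigenvectorUnitary.1 = 1 :=
    Unitary.star_mul_self_of_mem hA.1.eigenvectorUnitary.2
  unfold sqrt
  simp only [Unitary.conjStarAlgAut_apply, mul_assoc]
  rw [← mul_assoc (star (hA.1.eigenvectorUnitary : Matrix m m 𝕜)), hU, one_mul,
    ← mul_assoc (diagonal _) (diagonal _), diagonal_mul_diagonal]
  congr 3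
  funext i
  simp only [Function.comp_apply]
  rw [← RCLike.ofReal_mul, Real.mul_self_sqrt (hA.eigenvalues_nonneg i)]

end Matrix.PosSemidef

/-- Partial transpose with respect to the second tensor factor. -/
def partialTranspose {d n : ℕ} (X : Matrix (Fin d × Fin n) (Fin d × Fin n) ℂ) :
    Matrix (Fin d × Fin n) (Fin d × Fin n) ℂ :=
  fun p q => X (p.1, q.2) (q.1, p.2)

/-- σ¼ = ρA^{1/4} ⊗ₖ diagonal(μ^{1/4}): the fourth root of the product density matrix. -/
noncomputable def sigmaFourth {d n : ℕ} (ρA : Matrix (Fin d) (Fin d) ℂ) (hρA : ρA.PosDef)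
    (μ : Fin n → ℝ) : Matrix (Fin d × Fin n) (Fin d × Fin n) ℂ :=
  hρA.posSemidef.posSemidef_sqrt.sqrt ⊗ₖ
    Matrix.diagonal (fun s => ((μ s ^ (1/4 : ℝ) : ℝ) : ℂ))

lemma pt_pt {d n : ℕ} (X : Matrix (Fin d × Fin n) (Fin d × Fin n) ℂ) :
    partialTranspose (partialTranspose X) = X := rfl

lemma pt_conj {d n : ℕ} (A : Matrix (Fin d) (Fin d) ℂ) (c : Fin n → ℂ)
    (M : Matrix (Fin d × Fin n) (Fin d × Fin n) ℂ) :
    partialTranspose ((A ⊗ₖ diagonal c) * M * (A ⊗ₖ diagonal c)) =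
      (A ⊗ₖ diagonal c) * partialTranspose M * (A ⊗ₖ diagonal c) := by
  ext ⟨i,s⟩ ⟨j,t⟩
  simp only [partialTranspose, mul_apply, kroneckerMap_apply, diagonal_apply,
    Fintype.sum_prod_type, mul_ite, ite_mul, mul_zero, zero_mul,
    Finset.sum_ite_eq, Finset.sum_ite_eq', Finset.mem_univ, if_true, Finset.sum_mul]
  exact Finset.sum_congr rfl fun k _ => Finset.sum_congr rfl fun l _ => by ring

lemma sigma_isUnit {d n : ℕ} (ρA : Matrix (Fin d) (Fin d) ℂ) (hρA : ρA.PosDef)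
    (μ : Fin n → ℝ) (hμ : ∀ s, 0 < μ s) : IsUnit (sigmaFourth ρA hρA μ) := by
  rw [Matrix.isUnit_iff_isUnit_det, sigmaFourth, det_kronecker]
  have hA4 : det (hρA.posSemidef.posSemidef_sqrt.sqrt) ≠ 0 := by
    intro h
    have e1 := hρA.posSemidef.sqrt_mul_self
    have e2 := hρA.posSemidef.posSemidef_sqrt.sqrt_mul_self
    have : det ρA = 0 := by
      rw [← e1, det_mul, ← e2, det_mul, h]; ring
    exact hρA.det_pos.ne' this
  have hc : det (diagonal (fun s : Fin n => ((μ s ^ (1/4 : ℝ) : ℝ) : ℂ))) ≠ 0 := by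
    rw [det_diagonal]
    exact Finset.prod_ne_zero_iff.2 fun s _ =>
      Complex.ofReal_ne_zero.2 (Real.rpow_pos_of_pos (hμ s) _).ne'
  exact (mul_ne_zero (pow_ne_zero _ hA4) (pow_ne_zero _ hc)).isUnit

lemma pt_sigma_conj {d n : ℕ} (ρA : Matrix (Fin d) (Fin d) ℂ) (hρA : ρA.PosDef)
    (μ : Fin n → ℝ) (M : Matrix (Fin d × Fin n) (Fin d × Fin n) ℂ) :
    partialTranspose (sigmaFourth ρA hρA μ * M * sigmaFourth ρA hρA μ) =
      sigmaFourth ρA hρA μ * partialTranspose M * sigmaFourth ρA hρA μ :=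
  pt_conj _ _ M

theorem stmt_3 {d n : ℕ} (hd : 1 ≤ d) (hn : 1 ≤ n)
    (ρA : Matrix (Fin d) (Fin d) ℂ) (hρA : ρA.PosDef)
    (μ : Fin n → ℝ) (hμ : ∀ s, 0 < μ s) :
    { X : Matrix (Fin d × Fin n) (Fin d × Fin n) ℂ |
        ∃ M : Matrix (Fin d × Fin n) (Fin d × Fin n) ℂ,
          M.PosSemidef ∧ (partialTranspose M).PosSemidef ∧
          X = sigmaFourth ρA hρA μ * M * sigmaFourth ρA hρA μ } =
      { X | ∃ M : Matrix (Fin d × Fin n) (Fin d × Fin n) ℂ,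
          M.PosSemidef ∧ X = sigmaFourth ρA hρA μ * M * sigmaFourth ρA hρA μ } ∩
      (partialTranspose '' { X | ∃ M : Matrix (Fin d × Fin n) (Fin d × Fin n) ℂ,
          M.PosSemidef ∧ X = sigmaFourth ρA hρA μ * M * sigmaFourth ρA hρA μ }) := by
  set σ := sigmaFourth ρA hρA μ with hσ
  have hu : IsUnit σ := sigma_isUnit ρA hρA μ hμ
  ext X
  constructor
  · rintro ⟨M, hM, hMτ, rfl⟩
    refine ⟨⟨M, hM, rfl⟩, σ * partialTranspose M * σ, ⟨partialTranspose M, hMτ, rfl⟩, ?_⟩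
    rw [pt_sigma_conj, pt_pt]
  · rintro ⟨⟨M, hM, rfl⟩, Y, ⟨N, hN, rfl⟩, hEq⟩
    rw [pt_sigma_conj] at hEq
    have hcan : partialTranspose N = M := by
      have h1 : σ * (partialTranspose N * σ) = σ * (M * σ) := by
        rw [← mul_assoc, ← mul_assoc]; exact hEq
      have h2 := hu.mul_left_cancel h1
      exact hu.mul_right_cancel h2
    refine ⟨M, hM, ?_, rfl⟩
    rw [← hcan, pt_pt]; exact hN
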